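/- arXiv:1303.1404 — 2 statements merged into one kernel-verified Lean document; each statement's English description precedes it below -/
import Mathlib

section
/- Let O be a discrete valuation ring, Δ a finite abelian group, and R = O[Δ] the group algebra. Let M be an R-module which, as an O-module, is free of rank n·|Δ| for some n ≥ 1, and suppose M is generated as an R-module by n elements x_1, …, x_n. Then x_1, …, x_n admit no nontrivial R-linear relation; that is, (x_1, …, x_n) is an R-basis of M, and M is a free R-module of rank n. -/
/-- The algebraic core of Proposition 2.4 of the paper: let `O` be a discrete valuation
ring, `Δ` a finite abelian group and `R = O[Δ]` the group algebra.  If `M` is an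
`R`-module which is free of rank `n * |Δ|` as an `O`-module (`n ≥ 1`) and which is
generated over `R` by elements `x 0, …, x (n-1)`, then the `x i` admit no nontrivial
`R`-linear relation: they are `R`-linearly independent and form an `R`-basis of `M`,
so that `M` is a free `R`-module of rank `n`. -/
theorem group_algebra_free_of_generators_of_rank
    {O : Type*} [CommRing O] [IsDomain O] [IsDiscreteValuationRing O]
    {Δ : Type*} [CommGroup Δ] [Fintype Δ]
    {M : Type*} [AddCommGroup M] [Module (MonoidAlgebra O Δ) M]
    [Module O M] [IsScalarTower O (MonoidAlgebra O Δ) M]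
    {n : ℕ} (hn : 1 ≤ n)
    (hfree : Nonempty (Module.Basis (Fin (n * Fintype.card Δ)) O M))
    (x : Fin n → M)
    (hgen : Submodule.span (MonoidAlgebra O Δ) (Set.range x) = ⊤) :
    LinearIndependent (MonoidAlgebra O Δ) x ∧
      ∃ b : Module.Basis (Fin n) (MonoidAlgebra O Δ) M, ∀ i, b i = x i := by
  classical
  set R := MonoidAlgebra O Δ
  obtain ⟨bM⟩ := hfree
  let f : (Fin n → R) →ₗ[R] M := Fintype.linearCombination R x
  have hf : Function.Surjective f := by
    rw [← LinearMap.range_eq_top]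
    show LinearMap.range (Fintype.linearCombination R x) = ⊤
    rw [Fintype.range_linearCombination, hgen]
  -- O-basis of Fin n → R
  let bR : Module.Basis Δ O R := MonoidAlgebra.basis Δ O
  let e0 : (Fin n × Δ) ≃ Fin (n * Fintype.card Δ) :=
    Fintype.equivFinOfCardEq (by simp [Fintype.card_prod])
  let bP : Module.Basis (Fin (n * Fintype.card Δ)) O (Fin n → R) :=
    (Pi.basis fun _ : Fin n => bR).reindex ((Equiv.sigmaEquivProd (Fin n) Δ).trans e0)
  haveI : Module.Finite O R := Module.Finite.of_basis bR
  let j : M ≃ₗ[O] (Fin n → R) := bM.equiv bP (Equiv.refl _)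
  let g : (Fin n → R) →ₗ[O] (Fin n → R) := j.toLinearMap ∘ₗ (f.restrictScalars O)
  have hg : Function.Surjective g := j.surjective.comp hf
  have hginj : Function.Injective g :=
    OrzechProperty.injective_of_surjective_endomorphism g hg
  have hinj : Function.Injective f := by
    intro a b hab
    exact hginj (by simp [g, hab])
  let e : (Fin n → R) ≃ₗ[R] M := LinearEquiv.ofBijective f ⟨hinj, hf⟩
  let b : Module.Basis (Fin n) R M := (Pi.basisFun R (Fin n)).map e
  have hb : ∀ i, b i = x i := by
    intro i
    simp [b, e, f, Pi.basisFun_apply]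
    erw [LinearEquiv.ofBijective_apply]
    simp
  have hx : ⇑b = x := funext hb
  refine ⟨?_, b, hb⟩
  have := b.linearIndependent
  rwa [hx] at this
end

section
/- Let R be a commutative local ring, H a free R-module of rank r ≥ 1, and L ⊆ H a free rank-one direct summand of H (i.e., L = R·x for some x ∈ H, and H = L ⊕ H' for some submodule H'). Then there exist R-linear functionals φ_1, …, φ_{r−1} : H → R such that the induced contraction map ⋀^r_R H → H, given on elementary wedges by v_1 ∧ ⋯ ∧ v_r ↦ Σ_{i=1}^r (−1)^{i−1} det(φ_j(v_k))_{1 ≤ j ≤ r−1, k ≠ i} · v_i, is injective with image exactly L. -/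
/-- Any alternating map on `n` copies of a rank-`n` free module is determined by its value
on a basis, via the determinant. -/
private lemma alt_map_eq_det_smul {R : Type*} [CommRing R] {H : Type*} [AddCommGroup H]
    [Module R H] {N : Type*} [AddCommGroup N] [Module R N] {n : ℕ} (b : Module.Basis (Fin n) R H)
    (g : H [⋀^Fin n]→ₗ[R] N) (v : Fin n → H) : g v = b.det v • g ⇑b := by
  have h : g = (LinearMap.toSpanSingleton R N (g ⇑b)).compAlternatingMap b.det := by
    refine Module.Basis.ext_alternating b fun i hinj => ?_
    let σ : Equiv.Perm (Fin n) := Equiv.ofBijective i (Finite.injective_iff_bijective.1 hinj)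
    show g (⇑b ∘ ⇑σ) = (LinearMap.toSpanSingleton R N (g ⇑b)) (b.det (⇑b ∘ ⇑σ))
    rw [AlternatingMap.map_perm, AlternatingMap.map_perm, Module.Basis.det_self,
      LinearMap.toSpanSingleton_apply]
    rw [Units.smul_def, Units.smul_def, Int.smul_one_eq_cast, Int.cast_smul_eq_zsmul]
  conv_lhs => rw [h]
  rfl

/-- Laplace-style expansion: `∑ i (-1)^i A i j · det(minor i 0) = δ_{j0} · det A`. -/
private lemma cofactor_sum {R : Type*} [CommRing R] {m : ℕ}
    (A : Matrix (Fin (m + 1)) (Fin (m + 1)) R) (j : Fin (m + 1)) :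
    ∑ i : Fin (m + 1), (-1) ^ (i : ℕ) * A i j * (A.submatrix i.succAbove Fin.succ).det
      = if j = 0 then A.det else 0 := by
  have h := Matrix.det_succ_column_zero (A.updateCol 0 fun i => A i j)
  have hsub : ∀ i : Fin (m + 1),
      (A.updateCol 0 fun i => A i j).submatrix i.succAbove Fin.succ
        = A.submatrix i.succAbove Fin.succ := by
    intro i
    ext k l
    simp [Matrix.submatrix_apply, Matrix.updateCol_ne (Fin.succ_ne_zero l)]
  simp only [hsub, Matrix.updateCol_self] at h
  rw [← h]
  by_cases hj : j = 0
  · subst hj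
    rw [if_pos rfl]
    congr 1
    exact Matrix.updateCol_eq_self A 0
  · rw [if_neg hj]
    refine Matrix.det_zero_of_column_eq (Ne.symm hj) fun k => ?_
    rw [Matrix.updateCol_self, Matrix.updateCol_ne hj]

/-- The single-level content of Proposition 3.2(i) of the paper: let `R` be a commutative
local ring, `H` a free `R`-module of rank `r = m + 1 ≥ 1` and `L ⊆ H` a free rank-one
direct summand (`L = R·x` and `L` has a complement in `H`).  Then there are linear
functionals `φ 0, …, φ (m-1) : H →ₗ[R] R` such that the induced contraction map
`⋀^r H → H`, sending an elementary wedge `v_1 ∧ ⋯ ∧ v_r` to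
`∑ i (-1)^(i-1) det(φ_j (v_k))_{j, k ≠ i} • v_i`, is injective with image exactly `L`. -/
theorem exists_contraction_onto_rank_one_summand
    {R : Type*} [CommRing R] [IsLocalRing R]
    {H : Type*} [AddCommGroup H] [Module R H] (m : ℕ)
    (hH : Nonempty (Module.Basis (Fin (m + 1)) R H))
    (L : Submodule R H) (x : H) (hLx : L = Submodule.span R {x})
    (hLfree : Nonempty (Module.Basis (Fin 1) R L))
    (hcompl : ∃ H' : Submodule R H, IsCompl L H') :
    ∃ (φ : Fin m → (H →ₗ[R] R)) (c : (⋀[R]^(m + 1) H) →ₗ[R] H),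
      (∀ v : Fin (m + 1) → H,
        c ⟨ExteriorAlgebra.ιMulti R (m + 1) v,
            ExteriorAlgebra.ιMulti_range R (m + 1) (Set.mem_range_self v)⟩ =
          ∑ i : Fin (m + 1),
            ((-1 : R) ^ (i : ℕ) *
              Matrix.det (Matrix.of fun j k : Fin m => φ j (v (i.succAbove k)))) • v i) ∧
      Function.Injective c ∧ LinearMap.range c = L := by
  classical
  obtain ⟨bH⟩ := hH
  obtain ⟨e⟩ := hLfree
  obtain ⟨H', hc⟩ := hcompl
  have hx : x ∈ L := hLx ▸ Submodule.mem_span_singleton_self x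
  -- `x` is a regular element: `r • x = 0 → r = 0`.
  have hreg : ∀ r : R, r • x = 0 → r = 0 := by
    intro r hr
    set y : R := e.repr ⟨x, hx⟩ 0 with hy
    have hspan : ∃ s : R, s • (⟨x, hx⟩ : L) = e 0 := by
      have : (↑(e 0) : H) ∈ Submodule.span R {x} := hLx ▸ (e 0).2
      obtain ⟨s, hs⟩ := Submodule.mem_span_singleton.mp this
      exact ⟨s, Subtype.ext hs⟩
    obtain ⟨s, hs⟩ := hspan
    have h1 : s * y = 1 := by
      have h := congrArg (fun l : L => e.repr l 0) hs
      simp only [map_smul, Finsupp.smul_apply, smul_eq_mul, Module.Basis.repr_self,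
        Finsupp.single_eq_same] at h
      exact h
    have h0 : r * y = 0 := by
      have hrL : r • (⟨x, hx⟩ : L) = 0 := Subtype.ext (by simpa using hr)
      have h := congrArg (fun l : L => e.repr l 0) hrL
      simp only [map_smul, Finsupp.smul_apply, smul_eq_mul, map_zero,
        Finsupp.coe_zero, Pi.zero_apply] at h
      exact h
    calc r = r * (s * y) := by rw [h1, mul_one]
    _ = s * (r * y) := by ring
    _ = 0 := by rw [h0, mul_zero]
  -- `x` is a basis of `L`.
  have hliL : LinearIndependent R (fun _ : Fin 1 => (⟨x, hx⟩ : L)) := by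
    rw [Fintype.linearIndependent_iff]
    intro g hg i
    have : g 0 • (⟨x, hx⟩ : L) = 0 := by simpa using hg
    have : g 0 • x = 0 := by simpa using congrArg Subtype.val this
    have := hreg _ this
    simpa [Subsingleton.elim i 0] using this
  have hspL : ⊤ ≤ Submodule.span R (Set.range fun _ : Fin 1 => (⟨x, hx⟩ : L)) := by
    rintro ⟨l, hl⟩ _
    have : l ∈ Submodule.span R {x} := hLx ▸ hl
    obtain ⟨s, hs⟩ := Submodule.mem_span_singleton.mp this
    have : (⟨l, hl⟩ : L) = s • ⟨x, hx⟩ := Subtype.ext hs.symm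
    rw [this]
    exact Submodule.smul_mem _ _ (Submodule.subset_span ⟨0, rfl⟩)
  let bL : Module.Basis (Fin 1) R L := Module.Basis.mk hliL hspL
  -- `H'` is free of rank `m`.
  have hHfin : Module.Finite R H := Module.Finite.of_basis bH
  have hHfree : Module.Free R H := Module.Free.of_basis bH
  have hproj : Module.Projective R H' :=
    Module.Projective.of_split H'.subtype (Submodule.linearProjOfIsCompl H' L hc.symm)
      (LinearMap.ext fun z => Submodule.projectionOnto_apply_left hc.symm z)
  have hfin : Module.Finite R H' :=
    Module.Finite.of_surjective (Submodule.linearProjOfIsCompl H' L hc.symm)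
      (LinearMap.range_eq_top.1 (Submodule.linearProjOfIsCompl_range hc.symm))
  have hfp : Module.FinitePresentation R H' := Module.finitePresentation_of_projective R H'
  have hfree : Module.Free R H' := Module.free_of_flat_of_isLocalRing
  let κ := Module.Free.ChooseBasisIndex R H'
  let bK : Module.Basis κ R H' := Module.Free.chooseBasis R H'
  -- the combined basis of `H`
  let bProd : Module.Basis (Fin 1 ⊕ κ) R H :=
    (bL.prod bK).map (Submodule.prodEquivOfIsCompl L H' hc)
  have hcard : Fintype.card κ = m := by
    have hcard' := Fintype.card_congr (Module.Basis.indexEquiv bProd bH)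
    simp [Fintype.card_sum] at hcard'
    omega
  let eκ : κ ≃ Fin m := Fintype.equivFinOfCardEq hcard
  let eIdx : (Fin 1 ⊕ κ) ≃ Fin (m + 1) :=
    ((Equiv.refl (Fin 1)).sumCongr eκ).trans (finSumFinEquiv.trans (finCongr (by omega)))
  let b : Module.Basis (Fin (m + 1)) R H := bProd.reindex eIdx
  have hb0 : b 0 = x := by
    have h0 : eIdx (Sum.inl 0) = 0 := by
      simp only [eIdx, Equiv.trans_apply, Equiv.sumCongr_apply, Sum.map_inl, Equiv.refl_apply,
        finSumFinEquiv_apply_left, finCongr_apply]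
      ext
      simp
    have : b (eIdx (Sum.inl 0)) = bProd (Sum.inl 0) := by
      simp [b, Module.Basis.reindex_apply]
    rw [h0] at this
    rw [this]
    simp only [bProd, Module.Basis.map_apply, Module.Basis.prod_apply, Sum.elim_inl]
    simp [bL, Module.Basis.mk_apply, Submodule.prodEquivOfIsCompl]
    exact (LinearEquiv.ofBijective_apply _ _).trans (by simp)
  -- the contraction map
  let F : ExteriorAlgebra R H →ₗ[R] R := ExteriorAlgebra.liftAlternating
    (Function.update (fun i => (0 : H [⋀^Fin i]→ₗ[R] R)) (m + 1) b.det)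
  let c : (⋀[R]^(m + 1) H) →ₗ[R] H :=
    (LinearMap.toSpanSingleton R H x).comp (F.comp (Submodule.subtype _))
  have hF : ∀ v : Fin (m + 1) → H, F (ExteriorAlgebra.ιMulti R (m + 1) v) = b.det v := by
    intro v
    simp only [F, ExteriorAlgebra.liftAlternating_apply_ιMulti, Function.update_self]
  have hcapp : ∀ z : ⋀[R]^(m + 1) H, c z = F (z : ExteriorAlgebra R H) • x := by
    intro z
    simp only [c, LinearMap.comp_apply, Submodule.subtype_apply,
      LinearMap.toSpanSingleton_apply]
  set w := ExteriorAlgebra.ιMulti R (m + 1) ⇑b with hw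
  have hwmem : w ∈ ⋀[R]^(m + 1) H :=
    ExteriorAlgebra.ιMulti_range R (m + 1) (Set.mem_range_self _)
  have hFw : F w = 1 := by rw [hw, hF, Module.Basis.det_self]
  have key : ∀ z : ⋀[R]^(m + 1) H,
      (z : ExteriorAlgebra R H) = F (z : ExteriorAlgebra R H) • w := by
    intro z
    have hz : (z : ExteriorAlgebra R H) ∈ Submodule.span R {w} := by
      have h1 : (z : ExteriorAlgebra R H)
          ∈ Submodule.span R (Set.range (ExteriorAlgebra.ιMulti R (m + 1) (M := H))) := by
        rw [ExteriorAlgebra.ιMulti_span_fixedDegree]; exact z.2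
      refine Submodule.span_le.2 ?_ h1
      rintro _ ⟨v, rfl⟩
      rw [alt_map_eq_det_smul b (ExteriorAlgebra.ιMulti R (m + 1)) v]
      exact Submodule.smul_mem _ _ (Submodule.mem_span_singleton_self w)
    obtain ⟨r, hr⟩ := Submodule.mem_span_singleton.mp hz
    rw [← hr, map_smul, smul_eq_mul, hFw, mul_one]
  refine ⟨fun j => b.coord j.succ, c, ?_, ?_, ?_⟩
  · -- the formula on elementary wedges
    intro v
    rw [hcapp, hF]
    set A : Matrix (Fin (m + 1)) (Fin (m + 1)) R := Matrix.of fun i j => b.repr (v i) j with hA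
    have hdetv : b.det v = A.det := by
      rw [Module.Basis.det_apply]
      have hAt : b.toMatrix v = A.transpose := by
        ext i j
        simp [hA, Module.Basis.toMatrix_apply]
      rw [hAt, Matrix.det_transpose]
    have hminor : ∀ i : Fin (m + 1),
        Matrix.det (Matrix.of fun j k : Fin m => (b.coord (Fin.succ j)) (v (i.succAbove k)))
          = (A.submatrix i.succAbove Fin.succ).det := by
      intro i
      have hAt : (Matrix.of fun j k : Fin m => (b.coord (Fin.succ j)) (v (i.succAbove k)))
          = (A.submatrix i.succAbove Fin.succ).transpose := by
        ext j k
        simp [hA, Module.Basis.coord_apply]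
      rw [hAt, Matrix.det_transpose]
    calc b.det v • x
        = ∑ j : Fin (m + 1), (if j = 0 then A.det else 0) • b j := by
          simp only [ite_smul, zero_smul, Finset.sum_ite_eq', Finset.mem_univ, if_true]
          rw [hdetv, ← hb0]
      _ = ∑ j : Fin (m + 1), (∑ i : Fin (m + 1),
            (-1) ^ (i : ℕ) * A i j * (A.submatrix i.succAbove Fin.succ).det) • b j := by
          refine Finset.sum_congr rfl fun j _ => ?_
          rw [cofactor_sum A j]
      _ = ∑ i : Fin (m + 1), ∑ j : Fin (m + 1),
            ((-1) ^ (i : ℕ) * A i j * (A.submatrix i.succAbove Fin.succ).det) • b j := by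
          simp_rw [Finset.sum_smul]
          exact Finset.sum_comm
      _ = ∑ i : Fin (m + 1), ((-1 : R) ^ (i : ℕ)
            * Matrix.det (Matrix.of fun j k : Fin m =>
                (b.coord (Fin.succ j)) (v (i.succAbove k)))) • v i := by
          refine Finset.sum_congr rfl fun i _ => ?_
          rw [hminor i]
          conv_rhs => rw [← b.sum_repr (v i)]
          rw [Finset.smul_sum]
          refine Finset.sum_congr rfl fun j _ => ?_
          rw [smul_smul]
          congr 1
          simp only [hA, Matrix.of_apply]
          ring
      _ = _ := rfl
  · -- injectivity
    intro z z' hzz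
    rw [hcapp, hcapp] at hzz
    have h2 : (F (z : ExteriorAlgebra R H) - F (z' : ExteriorAlgebra R H)) • x = 0 := by
      rw [sub_smul, hzz, sub_self]
    have h3 : F (z : ExteriorAlgebra R H) = F (z' : ExteriorAlgebra R H) :=
      sub_eq_zero.mp (hreg _ h2)
    exact Subtype.ext (by rw [key z, key z', h3])
  · -- range
    apply le_antisymm
    · rintro _ ⟨z, rfl⟩
      rw [hcapp, hLx]
      exact Submodule.smul_mem _ _ (Submodule.mem_span_singleton_self x)
    · have hxr : x ∈ LinearMap.range c := by
        refine ⟨⟨w, hwmem⟩, ?_⟩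
        rw [hcapp, hFw, one_smul]
      rw [hLx]
      exact Submodule.span_le.2 (Set.singleton_subset_iff.2 hxr)
end
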